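/- arXiv:2207.10050 — 2 statements merged into one kernel-verified Lean document; each statement's English description precedes it below -/
import Mathlib

section
/- For real numbers a > 0, b > 0, the minimum value of g(d) = -a·log(d) - b·log(1-d) over d ∈ (0,1) equals (a+b)·H(a/(a+b)), where H(x) = -x·log(x) - (1-x)·log(1-x) is the binary entropy function. -/
open Real Set

/-- The minimum value of `g(d) = -a log d - b log(1-d)` over `(0,1)` equals
`(a+b) · H(a/(a+b))` where `H` is the binary (natural-log) entropy. -/
theorem stmt_1 (a b : ℝ) (ha : 0 < a) (hb : 0 < b)
    (g H : ℝ → ℝ)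
    (hg : ∀ d, g d = -a * Real.log d - b * Real.log (1 - d))
    (hH : ∀ x, H x = -x * Real.log x - (1 - x) * Real.log (1 - x)) :
    IsLeast (g '' Set.Ioo (0 : ℝ) 1) ((a + b) * H (a / (a + b))) := by
  have hs : 0 < a + b := by linarith
  set x : ℝ := a / (a + b) with hx
  have hx0 : 0 < x := div_pos ha hs
  have hx1 : x < 1 := by rw [hx, div_lt_one hs]; linarith
  have h1x : 1 - x = b / (a + b) := by rw [hx]; field_simp; ring
  have key : (a + b) * H x = -a * Real.log x - b * Real.log (1 - x) := by
    rw [hH, hx]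
    have : (1 : ℝ) - a / (a+b) = b / (a+b) := by field_simp; ring
    rw [this]
    field_simp
  constructor
  · exact ⟨x, ⟨hx0, hx1⟩, by rw [hg, key]⟩
  · rintro y ⟨d, ⟨hd0, hd1⟩, rfl⟩
    rw [hg, key]
    have l1 : Real.log d - Real.log x ≤ d / x - 1 := by
      rw [← Real.log_div (ne_of_gt hd0) (ne_of_gt hx0)]
      exact Real.log_le_sub_one_of_pos (div_pos hd0 hx0)
    have l2 : Real.log (1 - d) - Real.log (1 - x) ≤ (1 - d) / (1 - x) - 1 := by
      rw [← Real.log_div (by linarith) (by linarith)]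
      exact Real.log_le_sub_one_of_pos (div_pos (by linarith) (by linarith))
    have f1 : a * (d / x) = (a + b) * d := by rw [hx]; field_simp
    have f2 : b * ((1 - d) / (1 - x)) = (a + b) * (1 - d) := by
      rw [h1x]; field_simp
    nlinarith [mul_le_mul_of_nonneg_left l1 ha.le, mul_le_mul_of_nonneg_left l2 hb.le]
end

section
/- Let p and q be probability densities on a measurable space X with p, q > 0, and define d*(x) = p(x)/(p(x)+q(x)). Then E_{x∼p}[-log d*(x)] + E_{x∼q}[-log(1-d*(x))] = 2·log 2 - 2·JSD(p, q), where JSD(p,q) = (1/2)·KL(p ‖ m) + (1/2)·KL(q ‖ m) with m = (p+q)/2, and d* minimizes the left-hand objective over all measurable d : X → (0,1). -/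
open Real MeasureTheory

lemma stmt_12_pointwise (a b t : ℝ) (ha : 0 < a) (hb : 0 < b)
    (ht : t ∈ Set.Ioo (0 : ℝ) 1) :
    a * (-Real.log (a / (a + b))) + b * (-Real.log (1 - a / (a + b)))
      ≤ a * (-Real.log t) + b * (-Real.log (1 - t)) := by
  obtain ⟨ht0, ht1⟩ := ht
  have h1t : 0 < 1 - t := by linarith
  have hs : 0 < a + b := by linarith
  have hrw : 1 - a / (a + b) = b / (a + b) := by field_simp; ring
  rw [hrw]
  have hA : a * (Real.log t - Real.log (a / (a + b))) ≤ t * (a + b) - a := by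
    have h := Real.log_le_sub_one_of_pos (x := t * (a + b) / a) (by positivity)
    have hlog : Real.log (t * (a + b) / a) = Real.log t - Real.log (a / (a + b)) := by
      rw [Real.log_div (by positivity) ha.ne', Real.log_mul ht0.ne' hs.ne',
        Real.log_div ha.ne' hs.ne']
      ring
    rw [hlog] at h
    calc a * (Real.log t - Real.log (a / (a + b))) ≤ a * (t * (a + b) / a - 1) :=
          mul_le_mul_of_nonneg_left h ha.le
      _ = t * (a + b) - a := by field_simp
  have hB : b * (Real.log (1 - t) - Real.log (b / (a + b))) ≤ (1 - t) * (a + b) - b := by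
    have h := Real.log_le_sub_one_of_pos (x := (1 - t) * (a + b) / b) (by positivity)
    have hlog : Real.log ((1 - t) * (a + b) / b)
        = Real.log (1 - t) - Real.log (b / (a + b)) := by
      rw [Real.log_div (by positivity) hb.ne', Real.log_mul h1t.ne' hs.ne',
        Real.log_div hb.ne' hs.ne']
      ring
    rw [hlog] at h
    calc b * (Real.log (1 - t) - Real.log (b / (a + b))) ≤ b * ((1 - t) * (a + b) / b - 1) :=
          mul_le_mul_of_nonneg_left h hb.le
      _ = (1 - t) * (a + b) - b := by field_simp
  nlinarith [hA, hB]

/-- Optimal-discriminator characterization: with densities `p, q > 0` (w.r.t. a base measure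
`μ`) and `d*(x) = p(x)/(p(x)+q(x))`, the discriminator objective at `d*` equals
`2 log 2 - 2 JSD(p,q)`, and `d*` minimizes the objective over all measurable
`d : X → (0,1)` (all expectations assumed finite). -/
theorem stmt_12 {X : Type*} [MeasurableSpace X] (μ : Measure X) [SigmaFinite μ]
    (p q : X → ℝ) (hpm : Measurable p) (hqm : Measurable q)
    (hp : ∀ x, 0 < p x) (hq : ∀ x, 0 < q x)
    (hp1 : ∫ x, p x ∂μ = 1) (hq1 : ∫ x, q x ∂μ = 1)
    (dstar m : X → ℝ)
    (hdstar : ∀ x, dstar x = p x / (p x + q x))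
    (hm : ∀ x, m x = (p x + q x) / 2)
    (JSD : ℝ)
    (hJSD : JSD = (1/2) * ∫ x, p x * Real.log (p x / m x) ∂μ
        + (1/2) * ∫ x, q x * Real.log (q x / m x) ∂μ)
    (hint1 : Integrable (fun x => p x * (-Real.log (dstar x))) μ)
    (hint2 : Integrable (fun x => q x * (-Real.log (1 - dstar x))) μ)
    (hint3 : Integrable (fun x => p x * Real.log (p x / m x)) μ)
    (hint4 : Integrable (fun x => q x * Real.log (q x / m x)) μ) :
    (∫ x, p x * (-Real.log (dstar x)) ∂μ) + (∫ x, q x * (-Real.log (1 - dstar x)) ∂μ)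
      = 2 * Real.log 2 - 2 * JSD ∧
    ∀ d : X → ℝ, Measurable d → (∀ x, d x ∈ Set.Ioo (0 : ℝ) 1) →
      Integrable (fun x => p x * (-Real.log (d x))) μ →
      Integrable (fun x => q x * (-Real.log (1 - d x))) μ →
      (∫ x, p x * (-Real.log (dstar x)) ∂μ) + (∫ x, q x * (-Real.log (1 - dstar x)) ∂μ)
        ≤ (∫ x, p x * (-Real.log (d x)) ∂μ) + (∫ x, q x * (-Real.log (1 - d x)) ∂μ) := by
  have hPint : Integrable p μ := by
    by_contra h
    rw [integral_undef h] at hp1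
    exact one_ne_zero hp1.symm
  have hQint : Integrable q μ := by
    by_contra h
    rw [integral_undef h] at hq1
    exact one_ne_zero hq1.symm
  have e1 : ∀ x, p x * (-Real.log (dstar x))
      = Real.log 2 * p x - p x * Real.log (p x / m x) := by
    intro x
    have hpx := hp x; have hqx := hq x
    have hs : 0 < p x + q x := by linarith
    rw [hdstar, hm]
    have h : Real.log (p x / ((p x + q x) / 2))
        = Real.log 2 + Real.log (p x / (p x + q x)) := by
      rw [show p x / ((p x + q x) / 2) = 2 * (p x / (p x + q x)) by field_simp,
        Real.log_mul two_ne_zero (by positivity)]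
    rw [h]; ring
  have e2 : ∀ x, q x * (-Real.log (1 - dstar x))
      = Real.log 2 * q x - q x * Real.log (q x / m x) := by
    intro x
    have hpx := hp x; have hqx := hq x
    have hs : 0 < p x + q x := by linarith
    rw [hdstar, hm, show 1 - p x / (p x + q x) = q x / (p x + q x) by field_simp; ring]
    have h : Real.log (q x / ((p x + q x) / 2))
        = Real.log 2 + Real.log (q x / (p x + q x)) := by
      rw [show q x / ((p x + q x) / 2) = 2 * (q x / (p x + q x)) by field_simp,
        Real.log_mul two_ne_zero (by positivity)]
    rw [h]; ring
  have I1 : ∫ x, p x * (-Real.log (dstar x)) ∂μ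
      = Real.log 2 - ∫ x, p x * Real.log (p x / m x) ∂μ := by
    simp only [e1]
    rw [integral_sub (hPint.const_mul _) hint3, integral_const_mul, hp1, mul_one]
  have I2 : ∫ x, q x * (-Real.log (1 - dstar x)) ∂μ
      = Real.log 2 - ∫ x, q x * Real.log (q x / m x) ∂μ := by
    simp only [e2]
    rw [integral_sub (hQint.const_mul _) hint4, integral_const_mul, hq1, mul_one]
  constructor
  · rw [I1, I2, hJSD]; ring
  · intro d hd hdIoo hi1 hi2
    rw [← integral_add hint1 hint2, ← integral_add hi1 hi2]
    refine integral_mono (hint1.add hint2) (hi1.add hi2) fun x => ?_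
    rw [hdstar]
    exact stmt_12_pointwise (p x) (q x) (d x) (hp x) (hq x) (hdIoo x)
end
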